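/- If k₁ and k₂ are distinct positive integers, then the groups P_{k₁} and P_{k₂} are not isomorphic, because their abelianizations are not isomorphic. -/

import Mathlib

/-- The relations of `P_k = ⟨a, b ∣ a b^(2^k) a⁻¹ b^(2^k), b a² b⁻¹ a²⟩`. -/
def PkRels (k : ℕ) : Set (FreeGroup (Fin 2)) :=
  { FreeGroup.of 0 * (FreeGroup.of 1) ^ (2 ^ k) * (FreeGroup.of 0)⁻¹ * (FreeGroup.of 1) ^ (2 ^ k),
    FreeGroup.of 1 * (FreeGroup.of 0) ^ 2 * (FreeGroup.of 1)⁻¹ * (FreeGroup.of 0) ^ 2 }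

abbrev Pk (k : ℕ) : Type := PresentedGroup (PkRels k)

namespace PkAux

variable (k : ℕ)

/-- images of generators in Pk -/
noncomputable def A : Pk k := PresentedGroup.of 0
noncomputable def B : Pk k := PresentedGroup.of 1

lemma rel1 : A k * B k ^ (2 ^ k) * (A k)⁻¹ * B k ^ (2 ^ k) = 1 := by
  have h : (FreeGroup.of 0 * (FreeGroup.of 1) ^ (2 ^ k) * (FreeGroup.of 0)⁻¹ *
      (FreeGroup.of 1) ^ (2 ^ k) : FreeGroup (Fin 2)) ∈ PkRels k := Or.inl rfl
  have := (QuotientGroup.eq_one_iff (N := Subgroup.normalClosure (PkRels k)) _).mpr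
    (Subgroup.subset_normalClosure h)
  exact this

lemma rel2 : B k * A k ^ 2 * (B k)⁻¹ * A k ^ 2 = 1 := by
  have h : (FreeGroup.of 1 * (FreeGroup.of 0) ^ 2 * (FreeGroup.of 1)⁻¹ *
      (FreeGroup.of 0) ^ 2 : FreeGroup (Fin 2)) ∈ PkRels k := Or.inr rfl
  have := (QuotientGroup.eq_one_iff (N := Subgroup.normalClosure (PkRels k)) _).mpr
    (Subgroup.subset_normalClosure h)
  exact this

noncomputable def α : Abelianization (Pk k) := Abelianization.of (A k)
noncomputable def β : Abelianization (Pk k) := Abelianization.of (B k)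

lemma alpha_pow : α k ^ 4 = 1 := by
  have := congrArg (Abelianization.of (G := Pk k)) (rel2 k)
  simp only [map_mul, map_pow, map_inv, map_one] at this
  have h : Abelianization.of (B k) * Abelianization.of (A k) ^ 2 *
      (Abelianization.of (B k))⁻¹ = Abelianization.of (A k) ^ 2 := by
    rw [mul_comm (Abelianization.of (B k)) _, mul_assoc, mul_inv_cancel, mul_one]
  rw [h] at this
  show α k ^ (2 + 2) = 1
  rw [pow_add]; exact this

lemma beta_pow : β k ^ (2 ^ (k + 1)) = 1 := by
  have := congrArg (Abelianization.of (G := Pk k)) (rel1 k)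
  simp only [map_mul, map_pow, map_inv, map_one] at this
  have h : Abelianization.of (A k) * Abelianization.of (B k) ^ (2 ^ k) *
      (Abelianization.of (A k))⁻¹ = Abelianization.of (B k) ^ (2 ^ k) := by
    rw [mul_comm (Abelianization.of (A k)) _, mul_assoc, mul_inv_cancel, mul_one]
  rw [h] at this
  have : β k ^ (2 ^ k) * β k ^ (2 ^ k) = 1 := this
  rw [← pow_add] at this
  rwa [pow_succ, mul_two]

end PkAux

namespace PkAux

abbrev T (k : ℕ) : Type := Multiplicative (ZMod 4 × ZMod (2 ^ (k + 1)))

def gen (k : ℕ) : Fin 2 → T k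
  | 0 => Multiplicative.ofAdd (1, 0)
  | 1 => Multiplicative.ofAdd (0, 1)

lemma two_pow_zmod (k : ℕ) : (2 ^ k + 2 ^ k : ZMod (2 ^ (k + 1))) = 0 := by
  have : ((2 ^ k + 2 ^ k : ℕ) : ZMod (2 ^ (k + 1))) = 0 := by
    rw [← two_mul, ← pow_succ']
    exact ZMod.natCast_self _
  exact_mod_cast this

lemma gen_rels (k : ℕ) : ∀ r ∈ PkRels k, FreeGroup.lift (gen k) r = 1 := by
  rintro r hr
  rcases hr with rfl | rfl <;>
    simp only [map_mul, map_pow, map_inv, FreeGroup.lift_apply_of] <;>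
    (show Multiplicative.ofAdd _ * (Multiplicative.ofAdd _) ^ _ *
      (Multiplicative.ofAdd _)⁻¹ * (Multiplicative.ofAdd _) ^ _ = 1) <;>
    apply Multiplicative.toAdd.injective <;>
    simp only [toAdd_mul, toAdd_pow, toAdd_inv, toAdd_ofAdd, toAdd_one] <;>
    refine Prod.ext ?_ ?_ <;>
    simp [Prod.fst_add, Prod.snd_add, nsmul_eq_mul]
  · exact two_pow_zmod k
  · decide

end PkAux

namespace PkAux

variable (k : ℕ)

noncomputable def f : Pk k →* T k := PresentedGroup.toGroup (gen_rels k)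

noncomputable def fbar : Abelianization (Pk k) →* T k := Abelianization.lift (f k)

noncomputable def φa : ZMod 4 →+ Additive (Abelianization (Pk k)) :=
  ZMod.lift 4 ⟨zmultiplesHom _ (Additive.ofMul (α k)), by
    show ((4 : ℤ) • Additive.ofMul (α k)) = 0
    rw [← ofMul_zpow, show ((4:ℤ)) = ((4:ℕ):ℤ) by norm_num, zpow_natCast]
    simp [alpha_pow k]⟩

noncomputable def φb : ZMod (2 ^ (k + 1)) →+ Additive (Abelianization (Pk k)) :=
  ZMod.lift (2 ^ (k + 1)) ⟨zmultiplesHom _ (Additive.ofMul (β k)), by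
    show (((2 ^ (k + 1) : ℕ) : ℤ) • Additive.ofMul (β k)) = 0
    rw [← ofMul_zpow, zpow_natCast]
    simp [beta_pow k]⟩

noncomputable def g : T k →* Abelianization (Pk k) :=
  AddMonoidHom.toMultiplicativeLeft ((φa k).coprod (φb k))

lemma g_apply (x y : ℤ) :
    g k (Multiplicative.ofAdd ((x : ZMod 4), (y : ZMod (2 ^ (k + 1))))) =
      Abelianization.of (A k) ^ x * Abelianization.of (B k) ^ y := by
  show Additive.toMul (φa k (x : ZMod 4) + φb k (y : ZMod (2 ^ (k + 1)))) = _
  rw [φa, φb, ZMod.lift_coe, ZMod.lift_coe]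
  show Additive.toMul (x • Additive.ofMul (α k) + y • Additive.ofMul (β k)) = _
  simp [← ofMul_zpow, α, β]

lemma left_inv : ∀ x, g k (fbar k x) = x := by
  have : (g k).comp (fbar k) = MonoidHom.id _ := by
    apply Abelianization.hom_ext
    apply PresentedGroup.ext
    intro x
    fin_cases x
    · show g k (fbar k (Abelianization.of (PresentedGroup.of 0))) = _
      rw [fbar, Abelianization.lift_apply_of, f, PresentedGroup.toGroup.of]
      have h := g_apply k 1 0
      push_cast at h
      simpa [gen, A] using h
    · show g k (fbar k (Abelianization.of (PresentedGroup.of 1))) = _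
      rw [fbar, Abelianization.lift_apply_of, f, PresentedGroup.toGroup.of]
      have h := g_apply k 0 1
      push_cast at h
      simpa [gen, B] using h
  intro x
  exact DFunLike.congr_fun this x

end PkAux

namespace PkAux

variable (k : ℕ)

lemma right_inv : ∀ y, fbar k (g k y) = y := by
  intro y
  obtain ⟨x, hx⟩ := ZMod.intCast_surjective (Multiplicative.toAdd y).1
  obtain ⟨z, hz⟩ := ZMod.intCast_surjective (Multiplicative.toAdd y).2
  have hy : y = Multiplicative.ofAdd ((x : ZMod 4), (z : ZMod (2 ^ (k + 1)))) := by
    rw [hx, hz]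
    exact (ofAdd_toAdd y).symm
  rw [hy, g_apply]
  rw [map_mul, map_zpow, map_zpow]
  rw [fbar, A, B, Abelianization.lift_apply_of, Abelianization.lift_apply_of, f,
    PresentedGroup.toGroup.of, PresentedGroup.toGroup.of]
  apply Multiplicative.toAdd.injective
  simp only [gen, toAdd_mul, toAdd_zpow, toAdd_ofAdd]
  refine Prod.ext ?_ ?_ <;> simp [Prod.fst_add, Prod.snd_add]

end PkAux

namespace PkAux

lemma card_ab (k : ℕ) : Nat.card (Abelianization (Pk k)) = 2 ^ (k + 3) := by
  have hb : Function.Bijective (fbar k) :=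
    Function.bijective_iff_has_inverse.mpr ⟨g k, left_inv k, right_inv k⟩
  rw [Nat.card_eq_of_bijective _ hb]
  rw [Nat.card_congr (Multiplicative.toAdd (α := ZMod 4 × ZMod (2 ^ (k + 1)))),
    Nat.card_prod, Nat.card_zmod, Nat.card_zmod]
  rw [show k + 3 = (k + 1) + 2 by ring, pow_add]
  ring

end PkAux


/-- If `k₁ ≠ k₂` are positive integers, then `P_{k₁} ≇ P_{k₂}`; indeed already their
abelianizations are not isomorphic. -/
theorem Pk_not_isomorphic (k₁ k₂ : ℕ) (hk₁ : 0 < k₁) (hk₂ : 0 < k₂) (hne : k₁ ≠ k₂) :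
    ¬ Nonempty (Abelianization (Pk k₁) ≃* Abelianization (Pk k₂)) ∧
    ¬ Nonempty (Pk k₁ ≃* Pk k₂) := by
  have h1 : ¬ Nonempty (Abelianization (Pk k₁) ≃* Abelianization (Pk k₂)) := by
    rintro ⟨e⟩
    have hc := Nat.card_congr e.toEquiv
    rw [PkAux.card_ab, PkAux.card_ab] at hc
    exact hne (Nat.add_right_cancel (Nat.pow_right_injective (le_refl 2) hc))
  exact ⟨h1, fun ⟨e⟩ => h1 ⟨e.abelianizationCongr⟩⟩
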